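/- A pair (A,B) of 3×3 complex matrices is equivalent under GL₂(ℂ)×GL₃(ℂ)×GL₃(ℂ) to the generic representative (I₃, diag(1,−1,0)) if and only if the binary cubic det(xA+yB) ∈ ℂ[x,y] factors as c·(a₁x+b₁y)(a₂x+b₂y)(a₃x+b₃y) with c ≠ 0 and the three vectors (aᵢ,bᵢ) ∈ ℂ² pairwise linearly independent (i.e. the determinant of the pencil has three distinct roots). -/

import Mathlib

open Matrix

/-- The 3×3 complex matrix unit `E_{ij}`. -/
def Emat (i j : Fin 3) : Matrix (Fin 3) (Fin 3) ℂ := single i j 1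

/-- Two pairs of 3×3 complex matrices are equivalent under `GL₂(ℂ) × GL₃(ℂ) × GL₃(ℂ)`,
acting by `((a b; c d), P, Q) · (A, B) = (P(aA+bB)Qᵀ, P(cA+dB)Qᵀ)`. -/
def TEquiv (p q : Matrix (Fin 3) (Fin 3) ℂ × Matrix (Fin 3) (Fin 3) ℂ) : Prop :=
  ∃ (g : GL (Fin 2) ℂ) (P Q : GL (Fin 3) ℂ),
    q.1 = P.val * (g.val 0 0 • p.1 + g.val 0 1 • p.2) * Q.valᵀ ∧
    q.2 = P.val * (g.val 1 0 • p.1 + g.val 1 1 • p.2) * Q.valᵀ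

/-! ### Auxiliary machinery -/

noncomputable section GTAux

open MvPolynomial

abbrev R2 := MvPolynomial (Fin 2) ℂ
abbrev M3 := Matrix (Fin 3) (Fin 3) ℂ

/-! #### The group action and basic properties of `TEquiv` -/

def GTact (g : GL (Fin 2) ℂ) (P Q : GL (Fin 3) ℂ) (p : M3 × M3) : M3 × M3 :=
  (P.val * (g.val 0 0 • p.1 + g.val 0 1 • p.2) * Q.valᵀ,
   P.val * (g.val 1 0 • p.1 + g.val 1 1 • p.2) * Q.valᵀ)

lemma GTconj_comb (P Q : M3) (a b : ℂ) (X Y : M3) :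
    a • (P*X*Qᵀ) + b • (P*Y*Qᵀ) = P * (a•X + b•Y) * Qᵀ := by
  rw [Matrix.mul_add, Matrix.add_mul, Matrix.mul_smul, Matrix.smul_mul,
    Matrix.mul_smul, Matrix.smul_mul]

lemma GTact_act (h g : GL (Fin 2) ℂ) (P' P Q' Q : GL (Fin 3) ℂ) (p : M3 × M3) :
    GTact h P' Q' (GTact g P Q p) = GTact (h*g) (P'*P) (Q'*Q) p := by
  have key : ∀ x y : ℂ,
      x • (g.val 0 0 • p.1 + g.val 0 1 • p.2) + y • (g.val 1 0 • p.1 + g.val 1 1 • p.2)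
        = (x * g.val 0 0 + y * g.val 1 0) • p.1 + (x * g.val 0 1 + y * g.val 1 1) • p.2 := by
    intro x y; module
  unfold GTact
  simp only [Units.val_mul, Matrix.mul_apply, Fin.sum_univ_two, GTconj_comb, transpose_mul]
  refine Prod.ext ?_ ?_ <;> simp only [] <;>
  · rw [key]
    noncomm_ring

lemma GTact_one (p : M3 × M3) : GTact 1 1 1 p = p := by
  unfold GTact
  simp [Matrix.one_apply]

lemma TEquiv_iff (p q : M3 × M3) : TEquiv p q ↔ ∃ g P Q, q = GTact g P Q p := by
  unfold TEquiv GTact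
  constructor
  · rintro ⟨g, P, Q, h1, h2⟩; exact ⟨g, P, Q, Prod.ext h1 h2⟩
  · rintro ⟨g, P, Q, rfl⟩; exact ⟨g, P, Q, rfl, rfl⟩

lemma TEquiv.trans' {p q r : M3 × M3} (h1 : TEquiv p q) (h2 : TEquiv q r) : TEquiv p r := by
  rw [TEquiv_iff] at h1 h2 ⊢
  obtain ⟨g, P, Q, rfl⟩ := h1; obtain ⟨g', P', Q', rfl⟩ := h2
  exact ⟨g'*g, P'*P, Q'*Q, GTact_act g' g P' P Q' Q p⟩

/-- build a GL element from a matrix with nonzero determinant -/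
def glMk {n : ℕ} (M : Matrix (Fin n) (Fin n) ℂ) (h : M.det ≠ 0) : GL (Fin n) ℂ :=
  ⟨M, M⁻¹, Matrix.mul_nonsing_inv M (isUnit_iff_ne_zero.mpr h),
    Matrix.nonsing_inv_mul M (isUnit_iff_ne_zero.mpr h)⟩

@[simp] lemma glMk_val {n : ℕ} (M : Matrix (Fin n) (Fin n) ℂ) (h : M.det ≠ 0) :
    (glMk M h).val = M := rfl

lemma GL_det_ne_zero {n : Type*} [Fintype n] [DecidableEq n] (P : GL n ℂ) :
    P.val.det ≠ 0 :=
  isUnit_iff_ne_zero.mp ((Matrix.isUnit_iff_isUnit_det _).mp P.isUnit)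

/-! #### Linear substitutions on binary forms -/

def GTsubst (g : Matrix (Fin 2) (Fin 2) ℂ) : R2 →ₐ[ℂ] R2 :=
  aeval ![C (g 0 0) * X 0 + C (g 1 0) * X 1, C (g 0 1) * X 0 + C (g 1 1) * X 1]

@[simp] lemma GTsubst_C (g : Matrix (Fin 2) (Fin 2) ℂ) (r : ℂ) : GTsubst g (C r) = C r := by
  simp [GTsubst, algebraMap_eq]

lemma GTsubst_L (g : Matrix (Fin 2) (Fin 2) ℂ) (a b : ℂ) :
    GTsubst g (C a * X 0 + C b * X 1)
      = C (g 0 0 * a + g 0 1 * b) * X 0 + C (g 1 0 * a + g 1 1 * b) * X 1 := by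
  simp [GTsubst, algebraMap_eq]
  ring

lemma GTsubst_subst (h g : Matrix (Fin 2) (Fin 2) ℂ) (p : R2) :
    GTsubst h (GTsubst g p) = GTsubst (h * g) p := by
  have : (GTsubst h).comp (GTsubst g) = GTsubst (h * g) := by
    apply MvPolynomial.algHom_ext
    intro i
    fin_cases i <;>
      simp [GTsubst, algebraMap_eq, Matrix.mul_apply, Fin.sum_univ_two] <;> ring
  exact DFunLike.congr_fun this p

lemma GTsubst_one (p : R2) : GTsubst 1 p = p := by
  have : GTsubst 1 = AlgHom.id ℂ R2 := by
    apply MvPolynomial.algHom_ext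
    intro i
    fin_cases i <;> simp [GTsubst, Matrix.one_apply]
  rw [this]; rfl

/-! #### The determinant of a pencil -/

def GTpencil (A B : M3) : Matrix (Fin 3) (Fin 3) R2 :=
  Matrix.of fun i j : Fin 3 => C (A i j) * X 0 + C (B i j) * X 1

lemma GTpencil_map_eval (A B : M3) (s t : ℂ) :
    (GTpencil A B).map (eval ![s, t]) = s • A + t • B := by
  ext i j
  simp [GTpencil, mul_comm]

lemma GTeval_det_pencil (A B : M3) (s t : ℂ) :
    eval ![s, t] (GTpencil A B).det = (s • A + t • B).det := by
  rw [RingHom.map_det, RingHom.mapMatrix_apply, GTpencil_map_eval]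

/-- scalar consequence of a factorization of the pencil determinant -/
lemma GTkey (A B : M3) (c : ℂ) (a b : Fin 3 → ℂ)
    (hD : (GTpencil A B).det = C c * ∏ i : Fin 3, (C (a i) * X 0 + C (b i) * X 1))
    (s t : ℂ) : (s • A + t • B).det = c * ∏ i : Fin 3, (a i * s + b i * t) := by
  have h := congrArg (eval ![s, t]) hD
  rw [GTeval_det_pencil] at h
  simpa using h

lemma GTpencil_act (g : Matrix (Fin 2) (Fin 2) ℂ) (P Q A B : M3) :
    GTpencil (P * (g 0 0 • A + g 0 1 • B) * Qᵀ) (P * (g 1 0 • A + g 1 1 • B) * Qᵀ)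
      = P.map C * (GTpencil A B).map (GTsubst g) * (Q.map C)ᵀ := by
  ext i j
  simp only [GTpencil, Matrix.mul_apply, Fin.sum_univ_three, Matrix.of_apply,
    Matrix.map_apply, Matrix.transpose_apply]
  simp only [GTsubst_L]
  simp only [Matrix.add_apply, Matrix.smul_apply, smul_eq_mul, map_add, _root_.map_mul]
  ring

lemma GTdet_pencil_act (g : Matrix (Fin 2) (Fin 2) ℂ) (P Q A B : M3) :
    (GTpencil (P * (g 0 0 • A + g 0 1 • B) * Qᵀ) (P * (g 1 0 • A + g 1 1 • B) * Qᵀ)).det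
      = C (P.det * Q.det) * GTsubst g (GTpencil A B).det := by
  rw [GTpencil_act, det_mul, det_mul, det_transpose]
  have hP : (C : ℂ →+* R2) P.det = (P.map (C : ℂ →+* R2)).det := by
    rw [RingHom.map_det, RingHom.mapMatrix_apply]
  have hQ : (C : ℂ →+* R2) Q.det = (Q.map (C : ℂ →+* R2)).det := by
    rw [RingHom.map_det, RingHom.mapMatrix_apply]
  have hs : GTsubst g (GTpencil A B).det = ((GTpencil A B).map (GTsubst g)).det := by
    have h := RingHom.map_det ((GTsubst g : R2 →ₐ[ℂ] R2) : R2 →+* R2) (GTpencil A B)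
    rw [RingHom.mapMatrix_apply] at h
    simpa using h
  rw [hs, ← hP, ← hQ, _root_.map_mul]; ring

lemma GTpencil_one_diag (d : Fin 3 → ℂ) :
    GTpencil 1 (diagonal d) = diagonal fun i => C 1 * X 0 + C (d i) * X 1 := by
  ext i j
  rcases eq_or_ne i j with rfl | hij
  · simp [GTpencil, diagonal_apply_eq]
  · simp [GTpencil, Matrix.one_apply_ne hij, diagonal_apply_ne _ hij]

lemma GTdet_pencil_one_diag (d : Fin 3 → ℂ) :
    (GTpencil 1 (diagonal d)).det = ∏ i : Fin 3, (C 1 * X 0 + C (d i) * X 1) := by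
  rw [GTpencil_one_diag, det_diagonal]

/-! #### Forward direction -/

theorem GTfwd (A B : M3) (h : TEquiv (A, B) (1, diagonal ![1, -1, 0])) :
    ∃ (c : ℂ) (a b : Fin 3 → ℂ), c ≠ 0 ∧
      (GTpencil A B).det = C c * ∏ i : Fin 3, (C (a i) * X 0 + C (b i) * X 1) ∧
      (∀ i j : Fin 3, i ≠ j → a i * b j ≠ a j * b i) := by
  obtain ⟨g, P, Q, e1, e2⟩ := h
  replace e1 : (1 : M3) = P.val * (g.val 0 0 • A + g.val 0 1 • B) * Q.valᵀ := e1
  replace e2 : (diagonal ![1,-1,0] : M3)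
      = P.val * (g.val 1 0 • A + g.val 1 1 • B) * Q.valᵀ := e2
  have hdet := GTdet_pencil_act g.val P.val Q.val A B
  rw [← e1, ← e2, GTdet_pencil_one_diag] at hdet
  set k := P.val.det * Q.val.det with hkdef
  have hk : k ≠ 0 := mul_ne_zero (GL_det_ne_zero P) (GL_det_ne_zero Q)
  set h0 : Matrix (Fin 2) (Fin 2) ℂ := (g⁻¹).val with hh0
  have h2 := congrArg (GTsubst h0) hdet
  rw [_root_.map_mul, GTsubst_C, GTsubst_subst, Units.inv_mul, GTsubst_one, map_prod] at h2
  simp only [GTsubst_L] at h2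
  refine ⟨k⁻¹, fun i => h0 0 0 * 1 + h0 0 1 * ![1, -1, 0] i,
    fun i => h0 1 0 * 1 + h0 1 1 * ![1, -1, 0] i, inv_ne_zero hk, ?_, ?_⟩
  · show (GTpencil A B).det = C k⁻¹ * ∏ i : Fin 3,
        (C (h0 0 0 * 1 + h0 0 1 * ![1, -1, 0] i) * X 0
          + C (h0 1 0 * 1 + h0 1 1 * ![1, -1, 0] i) * X 1)
    rw [h2, ← mul_assoc, ← _root_.map_mul, inv_mul_cancel₀ hk, C_1, one_mul]
  · intro i j hij heq
    simp only [] at heq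
    have hdj : (![1, -1, 0] : Fin 3 → ℂ) j - ![1, -1, 0] i ≠ 0 := by
      fin_cases i <;> fin_cases j <;> simp_all <;> norm_num
    have hdh : h0.det ≠ 0 := GL_det_ne_zero g⁻¹
    rw [Matrix.det_fin_two] at hdh
    have hz : (h0 0 0 * h0 1 1 - h0 0 1 * h0 1 0)
        * ((![1, -1, 0] : Fin 3 → ℂ) j - ![1, -1, 0] i) = 0 := by
      linear_combination heq
    rcases mul_eq_zero.mp hz with h' | h'
    · exact hdh h'
    · exact hdj h'

/-! #### Backward direction : the four elementary steps -/

-- step 1 : (A,B) ~ (A + t•B, B)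
lemma GTstep1 (A B : M3) (t : ℂ) : TEquiv (A, B) (A + t • B, B) := by
  refine ⟨glMk !![1, t; 0, 1] (by simp [Matrix.det_fin_two_of]), 1, 1, ?_, ?_⟩ <;>
    simp [Matrix.one_apply]

-- step 2 : A invertible : (A, B) ~ (1, A⁻¹B)
lemma GTstep2 (A B : M3) (hA : A.det ≠ 0) : TEquiv (A, B) (1, A⁻¹ * B) := by
  have hi : A⁻¹.det ≠ 0 := by
    rw [Matrix.det_nonsing_inv, Ring.inverse_eq_inv']
    exact inv_ne_zero hA
  refine ⟨1, glMk A⁻¹ hi, 1, ?_, ?_⟩ <;>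
    simp [Matrix.one_apply, Matrix.nonsing_inv_mul A (isUnit_iff_ne_zero.mpr hA)]

-- step 3 : conjugating to a diagonal
lemma GTstep3 (M : M3) (μ : Fin 3 → ℂ) (S : M3) (hS : S.det ≠ 0)
    (hMS : M * S = S * diagonal μ) : TEquiv (1, M) (1, diagonal μ) := by
  have hT : Sᵀ.det ≠ 0 := by rwa [Matrix.det_transpose]
  have hi : S⁻¹.det ≠ 0 := by
    rw [Matrix.det_nonsing_inv, Ring.inverse_eq_inv']; exact inv_ne_zero hS
  have hinv := Matrix.nonsing_inv_mul S (isUnit_iff_ne_zero.mpr hS)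
  refine ⟨1, glMk S⁻¹ hi, glMk Sᵀ hT, ?_, ?_⟩ <;>
    simp [Matrix.one_apply, transpose_transpose]
  · exact hinv.symm
  · rw [Matrix.mul_assoc, hMS, ← Matrix.mul_assoc, hinv, Matrix.one_mul]

-- step 4 : Möbius normalization of a diagonal pencil with distinct entries
lemma GTstep4 (μ : Fin 3 → ℂ) (hdist : ∀ i j : Fin 3, i ≠ j → μ i ≠ μ j) :
    TEquiv (1, diagonal μ) (1, diagonal ![1, -1, 0]) := by
  have h01 : μ 0 - μ 1 ≠ 0 := sub_ne_zero.mpr (hdist 0 1 (by decide))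
  have h02 : μ 0 - μ 2 ≠ 0 := sub_ne_zero.mpr (hdist 0 2 (by decide))
  have h21 : μ 2 - μ 1 ≠ 0 := sub_ne_zero.mpr fun h => hdist 2 1 (by decide) h
  set b' : ℂ := (μ 0 + μ 1 - 2 * μ 2) / (μ 0 - μ 1) with hb'
  set a' : ℂ := μ 0 - μ 2 - b' * μ 0 with ha'
  set e : Fin 3 → ℂ := fun i => a' + b' * μ i with he
  have he0 : e 0 = μ 0 - μ 2 := by rw [he]; ring
  have he1 : e 1 = μ 2 - μ 1 := by
    rw [he, ha', hb']; field_simp; ring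
  have he2 : e 2 = 2 * (μ 0 - μ 2) * (μ 2 - μ 1) / (μ 0 - μ 1) := by
    rw [he, ha', hb']; field_simp; ring
  have hene : ∀ i, e i ≠ 0 := by
    intro i
    fin_cases i <;> simp only [Fin.isValue, show ((⟨0, by norm_num⟩ : Fin 3)) = 0 from rfl,
      show ((⟨1, by norm_num⟩ : Fin 3)) = 1 from rfl, show ((⟨2, by norm_num⟩ : Fin 3)) = 2 from rfl]
    · rw [he0]; exact h02
    · rw [he1]; exact h21
    · rw [he2]
      exact div_ne_zero (by exact mul_ne_zero (mul_ne_zero two_ne_zero h02) h21) h01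
  have hdetg : (!![a', b'; -(μ 2), 1] : Matrix (Fin 2) (Fin 2) ℂ).det ≠ 0 := by
    rw [Matrix.det_fin_two_of]
    have : a' * 1 - b' * -(μ 2) = e 2 := by rw [he]; ring
    rw [this]; exact hene 2
  have hdetP : (diagonal fun i => (e i)⁻¹ : M3).det ≠ 0 := by
    rw [det_diagonal]
    exact Finset.prod_ne_zero_iff.mpr fun i _ => inv_ne_zero (hene i)
  refine ⟨glMk _ hdetg, glMk _ hdetP, 1, ?_, ?_⟩
  · show (1 : M3) = (diagonal fun i => (e i)⁻¹) * (a' • 1 + b' • diagonal μ) * (1 : M3)ᵀ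
    have hc : a' • (1 : M3) + b' • diagonal μ = diagonal e := by
      rw [he]
      ext i j
      rcases eq_or_ne i j with rfl | hij
      · simp [Matrix.one_apply_eq, diagonal_apply_eq]
      · simp [Matrix.one_apply_ne hij, diagonal_apply_ne _ hij]
    rw [transpose_one, Matrix.mul_one, hc, diagonal_mul_diagonal]
    have : ∀ i, (e i)⁻¹ * e i = 1 := fun i => inv_mul_cancel₀ (hene i)
    rw [show (fun i => (e i)⁻¹ * e i) = fun _ => (1:ℂ) from funext this, diagonal_one]
  · show (diagonal ![1,-1,0] : M3)
        = (diagonal fun i => (e i)⁻¹) * (-(μ 2) • 1 + (1:ℂ) • diagonal μ) * (1 : M3)ᵀ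
    have hc : -(μ 2) • (1 : M3) + (1:ℂ) • diagonal μ = diagonal fun i => μ i - μ 2 := by
      ext i j
      rcases eq_or_ne i j with rfl | hij
      · simp [Matrix.one_apply_eq, diagonal_apply_eq]; ring
      · simp [Matrix.one_apply_ne hij, diagonal_apply_ne _ hij]
    rw [transpose_one, Matrix.mul_one, hc, diagonal_mul_diagonal]
    have hfun : (fun i => (e i)⁻¹ * (μ i - μ 2)) = (![1, -1, 0] : Fin 3 → ℂ) := by
      funext i
      fin_cases i
      · show (e 0)⁻¹ * (μ 0 - μ 2) = 1
        rw [he0, inv_mul_cancel₀ h02]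
      · show (e 1)⁻¹ * (μ 1 - μ 2) = -1
        rw [he1]
        field_simp
        ring
      · show (e 2)⁻¹ * (μ 2 - μ 2) = 0
        rw [sub_self, mul_zero]
    rw [hfun]

-- eigen-extraction : if det(M - μ•1) = 0 for three distinct μ's, M is similar to diagonal μ
lemma GTeigen (M : M3) (μ : Fin 3 → ℂ) (hdist : ∀ i j : Fin 3, i ≠ j → μ i ≠ μ j)
    (hdet : ∀ i, (M - μ i • 1).det = 0) :
    ∃ S : M3, S.det ≠ 0 ∧ M * S = S * diagonal μ := by
  have hvec : ∀ i, ∃ v : Fin 3 → ℂ, v ≠ 0 ∧ M.mulVec v = μ i • v := by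
    intro i
    obtain ⟨v, hv0, hv⟩ := Matrix.exists_mulVec_eq_zero_iff.mpr (hdet i)
    refine ⟨v, hv0, ?_⟩
    rw [Matrix.sub_mulVec, Matrix.smul_mulVec, Matrix.one_mulVec, sub_eq_zero] at hv
    exact hv
  choose v hv0 hveq using hvec
  have hind : LinearIndependent ℂ v := by
    apply Module.End.eigenvectors_linearIndependent' (Matrix.mulVecLin M) μ
      (fun i j h => by
        by_contra hne
        exact hdist i j hne h)
    intro i
    rw [Module.End.hasEigenvector_iff]
    refine ⟨Module.End.mem_eigenspace_iff.mpr ?_, hv0 i⟩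
    simpa using hveq i
  refine ⟨Matrix.of fun i j => v j i, ?_, ?_⟩
  · have : IsUnit (Matrix.of fun i j : Fin 3 => v j i) := by
      rw [← Matrix.linearIndependent_cols_iff_isUnit]
      exact hind
    exact isUnit_iff_ne_zero.mp ((Matrix.isUnit_iff_isUnit_det _).mp this)
  · ext i j
    have h := congrFun (hveq j) i
    simp only [Matrix.mulVec, dotProduct, Pi.smul_apply, smul_eq_mul] at h
    rw [Matrix.mul_diagonal, Matrix.mul_apply]
    simp only [Matrix.of_apply]
    rw [h]
    ring

/-! #### Backward direction : assembly -/

theorem GTbwd (A B : M3) (c : ℂ) (a b : Fin 3 → ℂ) (hc : c ≠ 0)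
    (hD : (GTpencil A B).det = C c * ∏ i : Fin 3, (C (a i) * X 0 + C (b i) * X 1))
    (hab : ∀ i j : Fin 3, i ≠ j → a i * b j ≠ a j * b i) :
    TEquiv (A, B) (1, diagonal ![1, -1, 0]) := by
  have key := GTkey A B c a b hD
  have hpair : ∀ i : Fin 3, ¬(a i = 0 ∧ b i = 0) := by
    rintro i ⟨h1, h2⟩
    have hne : i ≠ i + 1 := by fin_cases i <;> decide
    exact hab i (i+1) hne (by rw [h1, h2]; ring)
  obtain ⟨t, ht⟩ : ∃ t : ℂ, ∀ i, a i + b i * t ≠ 0 := by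
    obtain ⟨t, htm⟩ := Infinite.exists_notMem_finset
      (Finset.univ.image fun i : Fin 3 => -(a i / b i))
    refine ⟨t, fun i h0 => ?_⟩
    by_cases hb : b i = 0
    · rw [hb] at h0
      simp only [zero_mul, add_zero] at h0
      exact hpair i ⟨h0, hb⟩
    · apply htm
      refine Finset.mem_image.mpr ⟨i, Finset.mem_univ _, ?_⟩
      field_simp
      linear_combination -h0
  set A' : M3 := A + t • B with hA'def
  have hA' : A'.det ≠ 0 := by
    have h1 := key 1 t
    rw [one_smul] at h1
    rw [hA'def, h1]
    refine mul_ne_zero hc (Finset.prod_ne_zero_iff.mpr fun i _ => ?_)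
    simpa using ht i
  set M : M3 := A'⁻¹ * B with hMdef
  set μ : Fin 3 → ℂ := fun i => b i / (a i + b i * t) with hμ
  have hμdist : ∀ i j : Fin 3, i ≠ j → μ i ≠ μ j := by
    intro i j hij h
    simp only [hμ] at h
    rw [div_eq_div_iff (ht i) (ht j)] at h
    exact hab i j hij (by linear_combination -h)
  have heig : ∀ i, (M - μ i • 1).det = 0 := by
    intro i
    have hBA : B - μ i • A' = (-(μ i)) • A + (1 - μ i * t) • B := by
      rw [hA'def]; module
    have hdet2 : (B - μ i • A').det = 0 := by
      rw [hBA, key]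
      refine mul_eq_zero_of_right _ (Finset.prod_eq_zero (Finset.mem_univ i) ?_)
      show a i * -(μ i) + b i * (1 - μ i * t) = 0
      have hz : (a i * -(μ i) + b i * (1 - μ i * t)) * (a i + b i * t) = 0 := by
        simp only [hμ]
        field_simp [ht i]
        ring
      exact (mul_eq_zero.mp hz).resolve_right (ht i)
    have hfact : M - μ i • 1 = A'⁻¹ * (B - μ i • A') := by
      rw [hMdef, Matrix.mul_sub, Matrix.mul_smul,
        Matrix.nonsing_inv_mul A' (isUnit_iff_ne_zero.mpr hA')]
    rw [hfact, det_mul, hdet2, mul_zero]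
  obtain ⟨S, hS, hMS⟩ := GTeigen M μ hμdist heig
  exact ((GTstep1 A B t).trans' ((GTstep2 A' B hA').trans'
    ((GTstep3 M μ S hS hMS).trans' (GTstep4 μ hμdist))))

end GTAux

open MvPolynomial in
/-- A pair `(A, B)` of 3×3 complex matrices is `GL₂(ℂ) × GL₃(ℂ) × GL₃(ℂ)`-equivalent to the
generic representative `(I₃, diag(1,−1,0))` if and only if the binary cubic `det(xA + yB)`
factors as `c·(a₁x+b₁y)(a₂x+b₂y)(a₃x+b₃y)` with `c ≠ 0` and the three vectors `(aᵢ, bᵢ)`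
pairwise linearly independent (the determinant of the pencil has three distinct roots). -/
theorem generic_tensor_pair_iff_three_distinct_roots (A B : Matrix (Fin 3) (Fin 3) ℂ) :
    TEquiv (A, B) (1, diagonal ![1, -1, 0]) ↔
    ∃ (c : ℂ) (a b : Fin 3 → ℂ), c ≠ 0 ∧
      (Matrix.of fun i j : Fin 3 =>
          C (A i j) * X 0 + C (B i j) * X 1 : Matrix (Fin 3) (Fin 3) (MvPolynomial (Fin 2) ℂ)).det
        = C c * ∏ i : Fin 3, (C (a i) * X 0 + C (b i) * X 1) ∧
      (∀ i j : Fin 3, i ≠ j → a i * b j ≠ a j * b i) := by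
  constructor
  · intro h
    exact GTfwd A B h
  · rintro ⟨c, a, b, hc, hD, hab⟩
    exact GTbwd A B c a b hc hD hab
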